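/- Let p be a prime, ω := Complex.exp(2πi/p), and for z : ZMod p set e(z) := ω^(z.val). Let V be a ℂ-vector space with Module.finrank ℂ V = p, let t : ZMod p with t ≠ 0, and let W : ZMod p × ZMod p → (V →ₗ[ℂ] V) satisfy W (0,0) = LinearMap.id and W u ∘ W v = e(−(t * u.1 * v.2)) • W (u + v) for all u v : ZMod p × ZMod p. Define the standard model ρ₀(g,h) : (ZMod p → ℂ) →ₗ[ℂ] (ZMod p → ℂ) by (ρ₀(g,h) f)(m) = e(t * h * m) * f(m − g). Then there exists a ℂ-linear equivalence Φ : V ≃ₗ[ℂ] (ZMod p → ℂ) such that Φ ∘ W (g,h) = ρ₀(g,h) ∘ Φ for all g h : ZMod p. -/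

import Mathlib

/-- Finite Stone–von Neumann uniqueness: every `p`-dimensional projective
representation of `(ZMod p)²` with the Heisenberg cocycle `e(−t u₁ v₂)`
(`t ≠ 0`) is equivalent to the standard model `ρ₀`. -/
theorem stmt_12 (p : ℕ) [Fact p.Prime]
    (e : ZMod p → ℂ)
    (he : ∀ z : ZMod p, e z = Complex.exp (2 * Real.pi * Complex.I / p) ^ z.val)
    (V : Type*) [AddCommGroup V] [Module ℂ V]
    (hV : Module.finrank ℂ V = p)
    (t : ZMod p) (ht : t ≠ 0)
    (W : ZMod p × ZMod p → (V →ₗ[ℂ] V))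
    (hW0 : W (0, 0) = LinearMap.id)
    (hW : ∀ u v : ZMod p × ZMod p,
      (W u).comp (W v) = e (-(t * u.1 * v.2)) • W (u + v))
    (ρ₀ : ZMod p → ZMod p → ((ZMod p → ℂ) →ₗ[ℂ] (ZMod p → ℂ)))
    (hρ₀ : ∀ (g h : ZMod p) (f : ZMod p → ℂ) (m : ZMod p),
      ρ₀ g h f m = e (t * h * m) * f (m - g)) :
    ∃ Φ : V ≃ₗ[ℂ] (ZMod p → ℂ),
      ∀ g h : ZMod p,
        Φ.toLinearMap.comp (W (g, h)) = (ρ₀ g h).comp Φ.toLinearMap := by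
  classical
  have hp : p.Prime := Fact.out
  haveI : NeZero p := ⟨hp.ne_zero⟩
  set ω : ℂ := Complex.exp (2 * Real.pi * Complex.I / p) with hωdef
  have hω : IsPrimitiveRoot ω p := Complex.isPrimitiveRoot_exp p hp.ne_zero
  have hωp : ω ^ p = 1 := hω.pow_eq_one
  have hmodpow : ∀ n : ℕ, ω ^ (n % p) = ω ^ n := by
    intro n
    conv_rhs => rw [← Nat.div_add_mod n p]
    rw [pow_add, pow_mul, hωp, one_pow, one_mul]
  have hadd : ∀ a b : ZMod p, e (a + b) = e a * e b := by
    intro a b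
    rw [he, he, he, ZMod.val_add, hmodpow, pow_add]
  have he0 : e 0 = 1 := by rw [he]; simp
  have hepow : ∀ (x : ZMod p) (n : ℕ), e x ^ n = e ((n : ZMod p) * x) := by
    intro x n
    induction n with
    | zero => simpa using he0.symm
    | succ n ih =>
      rw [pow_succ, ih, ← hadd]
      congr 1
      push_cast
      ring
  -- operators
  have hW0' : W (0, 0) = 1 := hW0
  have hWmul : ∀ u v : ZMod p × ZMod p,
      W u * W v = e (-(t * u.1 * v.2)) • W (u + v) := by
    intro u v
    rw [Module.End.mul_eq_comp]
    exact hW u v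
  set A : Module.End ℂ V := W (1, 0) with hAdef
  set B : Module.End ℂ V := W (0, 1) with hBdef
  have hA2 : ∀ g g' : ZMod p, W (g, 0) * W (g', 0) = W (g + g', 0) := by
    intro g g'
    rw [hWmul]
    simp [he0, Prod.mk_add_mk]
  have hB2 : ∀ h h' : ZMod p, W (0, h) * W (0, h') = W (0, h + h') := by
    intro h h'
    rw [hWmul]
    simp [he0, Prod.mk_add_mk]
  have hApow : ∀ n : ℕ, A ^ n = W ((n : ZMod p), 0) := by
    intro n
    induction n with
    | zero => simpa using hW0'.symm
    | succ n ih =>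
      rw [pow_succ, ih, hAdef, hA2]
      push_cast
      rfl
  have hBpow : ∀ n : ℕ, B ^ n = W (0, (n : ZMod p)) := by
    intro n
    induction n with
    | zero => simpa using hW0'.symm
    | succ n ih =>
      rw [pow_succ, ih, hBdef, hB2]
      push_cast
      rfl
  have hAp : A ^ p = 1 := by
    rw [hApow, ZMod.natCast_self, hW0']
  have hBp : B ^ p = 1 := by
    rw [hBpow, ZMod.natCast_self, hW0']
  have hAcast : ∀ m : ℕ, A ^ m = A ^ ((m : ZMod p)).val := by
    intro m
    conv_lhs => rw [← Nat.div_add_mod m p]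
    rw [pow_add, pow_mul, hAp, one_pow, one_mul, ZMod.val_natCast]
  have hWgh : ∀ g h : ZMod p, W (g, h) = W (0, h) * W (g, 0) := by
    intro g h
    rw [hWmul]
    simp [he0, Prod.mk_add_mk]
  have hWB : ∀ h : ZMod p, W (0, h) = B ^ h.val := by
    intro h
    rw [hBpow, ZMod.natCast_rightInverse h]
  have hWA : ∀ g : ZMod p, W (g, 0) = A ^ g.val := by
    intro g
    rw [hApow, ZMod.natCast_rightInverse g]
  -- commutation
  have hBA : B * A = W (1, 1) := by
    rw [hBdef, hAdef, hWmul]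
    simp [he0, Prod.mk_add_mk]
  have hAB : A * B = e (-t) • W (1, 1) := by
    rw [hBdef, hAdef, hWmul]
    norm_num
  have hcomm : B * A = e t • (A * B) := by
    rw [hAB, hBA, smul_smul, ← hadd, add_neg_cancel, he0, one_smul]
  have hBApow : ∀ m : ℕ, B * A ^ m = (e t ^ m) • (A ^ m * B) := by
    intro m
    induction m with
    | zero => simp
    | succ m ih =>
      rw [pow_succ, ← mul_assoc, ih, smul_mul_assoc, mul_assoc, hcomm,
        mul_smul_comm, smul_smul, pow_succ, mul_assoc]
  -- eigenvector
  haveI : FiniteDimensional ℂ V := .of_finrank_pos (hV ▸ hp.pos)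
  haveI : Nontrivial V := Module.nontrivial_of_finrank_pos (R := ℂ) (hV ▸ hp.pos)
  obtain ⟨μ, hμ⟩ := Module.End.exists_eigenvalue B
  obtain ⟨v, hv⟩ := hμ.exists_hasEigenvector
  have hv0 : v ≠ 0 := hv.2
  have hBv : B v = μ • v := hv.apply_eq_smul
  have hBpowv : ∀ n : ℕ, (B ^ n) v = μ ^ n • v := by
    intro n
    induction n with
    | zero => simp
    | succ n ih =>
      rw [pow_succ, Module.End.mul_apply, hBv, map_smul, ih, smul_smul, pow_succ, mul_comm]
  have hμp : μ ^ p = 1 := by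
    have h1 : (B ^ p) v = v := by rw [hBp]; rfl
    have h2 := (hBpowv p).symm.trans h1
    refine smul_left_injective ℂ hv0 ?_
    show μ ^ p • v = (1 : ℂ) • v
    rw [one_smul, h2]
  obtain ⟨k, hk, hkμ⟩ := hω.eq_pow_of_pow_eq_one hμp
  set a₀ : ZMod p := t⁻¹ * (k : ZMod p) with ha₀
  have hta₀ : t * a₀ = (k : ZMod p) := by
    rw [ha₀, ← mul_assoc, mul_inv_cancel₀ ht, one_mul]
  have hμe : e (t * a₀) = μ := by
    rw [he, hta₀, ZMod.val_natCast, hmodpow, hkμ]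
  -- the basis vectors
  set b₀ : ZMod p → V := fun a => (A ^ (a - a₀).val) v with hb₀def
  have hAnb : ∀ (n : ℕ) (a : ZMod p), (A ^ n) (b₀ a) = b₀ (a + n) := by
    intro n a
    have h1 : A ^ n * A ^ (a - a₀).val = A ^ ((a + (n : ZMod p) - a₀).val) := by
      rw [← pow_add, hAcast (n + (a - a₀).val)]
      congr 2
      rw [Nat.cast_add, ZMod.natCast_rightInverse]
      ring
    calc (A ^ n) (b₀ a) = (A ^ n * A ^ (a - a₀).val) v := rfl
      _ = b₀ (a + n) := by rw [h1]
  have hBb : ∀ a : ZMod p, B (b₀ a) = e (t * a) • b₀ a := by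
    intro a
    have h1 : B (b₀ a) = (B * A ^ (a - a₀).val) v := rfl
    rw [h1, hBApow, LinearMap.smul_apply, Module.End.mul_apply, hBv, map_smul,
      smul_smul]
    congr 1
    rw [hepow, ← hμe, ← hadd]
    congr 1
    rw [ZMod.natCast_rightInverse]
    ring
  have hBnb : ∀ (n : ℕ) (a : ZMod p), (B ^ n) (b₀ a) = e (t * a) ^ n • b₀ a := by
    intro n a
    induction n with
    | zero => simp
    | succ n ih =>
      rw [pow_succ, Module.End.mul_apply, hBb, map_smul, ih, smul_smul, pow_succ, mul_comm]
  have hb0 : ∀ a : ZMod p, b₀ a ≠ 0 := by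
    intro a h0
    have hm := (ZMod.val_lt (a - a₀)).le
    have h1 : (A ^ (p - (a - a₀).val) * A ^ (a - a₀).val) v = v := by
      rw [← pow_add, Nat.sub_add_cancel hm, hAp]; rfl
    rw [Module.End.mul_apply] at h1
    rw [show (A ^ (a - a₀).val) v = b₀ a from rfl, h0, map_zero] at h1
    exact hv0 h1.symm
  have heinj : Function.Injective fun a : ZMod p => e (t * a) := by
    intro a a' hq
    simp only [he] at hq
    have h1 := hω.pow_inj (ZMod.val_lt _) (ZMod.val_lt _) hq
    have h2 : t * a = t * a' := by
      rw [← ZMod.natCast_rightInverse (t * a), ← ZMod.natCast_rightInverse (t * a'), h1]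
    exact mul_left_cancel₀ ht h2
  have heig : ∀ a : ZMod p, B.HasEigenvector (e (t * a)) (b₀ a) := by
    intro a
    exact ⟨Module.End.mem_eigenspace_iff.2 (hBb a), hb0 a⟩
  have hli : LinearIndependent ℂ b₀ :=
    B.eigenvectors_linearIndependent' (fun a => e (t * a)) heinj b₀ heig
  have hcard : Fintype.card (ZMod p) = Module.finrank ℂ V := by
    rw [ZMod.card, hV]
  let bas : Module.Basis (ZMod p) ℂ V := basisOfLinearIndependentOfCardEqFinrank hli hcard
  have hbas : ∀ a, bas a = b₀ a := by
    intro a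
    rw [show bas = basisOfLinearIndependentOfCardEqFinrank hli hcard from rfl,
      coe_basisOfLinearIndependentOfCardEqFinrank]
  refine ⟨bas.equivFun, ?_⟩
  intro g h
  apply bas.ext
  intro a
  simp only [LinearMap.comp_apply, LinearEquiv.coe_coe]
  have hWact : W (g, h) (bas a) = e (t * h * (a + g)) • b₀ (a + g) := by
    have h1 : W (g, h) = B ^ h.val * A ^ g.val := by
      rw [hWgh, hWB, hWA]
    rw [hbas, h1, Module.End.mul_apply]
    have h2 : (A ^ g.val) (b₀ a) = b₀ (a + g) := by
      rw [hAnb, ZMod.natCast_rightInverse]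
    rw [h2, hBnb, hepow]
    congr 2
    rw [ZMod.natCast_rightInverse]
    ring
  rw [hWact, map_smul]
  funext m
  have hδ : ∀ (i j : ZMod p), bas.equivFun (bas i) j = if i = j then 1 else 0 :=
    fun i j => bas.equivFun_self i j
  rw [hρ₀]
  simp only [Pi.smul_apply, smul_eq_mul, ← hbas]
  rw [hδ, hδ]
  by_cases hm : a + g = m
  · subst hm
    simp
  · have hm2 : a ≠ m - g := fun hc => hm (by rw [hc]; ring)
    simp [hm, hm2]
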